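/- In the Robin obstacle problem setting: for all $g \in L^2(\Omega)$, $q \in L^2(\Gamma_2)$, $b \in H^{1/2}(\Gamma_1)$ and $0 < h_2 \le h_1$, one has $\|u_{g_{h_2}} - u_{g_{h_1}}\|_{H^1(\Omega)} \le \frac{\|\gamma_0\|}{\lambda_1 \min(1, h_2)} \|b - u_{g_{h_1}}\|_{L^2(\Gamma_1)} (h_1 - h_2)$, where $\gamma_0$ is the trace operator from $H^1(\Omega)$ to $L^2(\Gamma_1)$ and $\lambda_1 \min(1,h)$ is the coercivity constant of $a_h$. -/

import Mathlib

open scoped InnerProductSpace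

/-- Lemma 3.2, estimate (3.17): Lipschitz-type dependence of the Robin obstacle-problem
solution on the heat transfer coefficient:
`‖u_{g_{h₂}} - u_{g_{h₁}}‖_V ≤ (‖γ₀‖ / (λ₁ min(1,h₂))) ‖b - u_{g_{h₁}}‖_{L²(Γ₁)} (h₁ - h₂)`,
for any `g`, `q`, `b` and `0 < h₂ ≤ h₁`. -/
theorem stmt_14 {V H B₁ B₂ : Type*}
    [NormedAddCommGroup V] [InnerProductSpace ℝ V] [CompleteSpace V] [Lattice V]
    [NormedAddCommGroup H] [Lattice H] [IsOrderedAddMonoid H] [HasSolidNorm H] [InnerProductSpace ℝ H] [CompleteSpace H]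
    [NormedAddCommGroup B₁] [Lattice B₁] [IsOrderedAddMonoid B₁] [HasSolidNorm B₁] [InnerProductSpace ℝ B₁] [CompleteSpace B₁]
    [NormedAddCommGroup B₂] [Lattice B₂] [IsOrderedAddMonoid B₂] [HasSolidNorm B₂] [InnerProductSpace ℝ B₂] [CompleteSpace B₂]
    (ι : V →L[ℝ] H) (hι : ∀ u v : V, u ≤ v ↔ ι u ≤ ι v)
    (γ₁ : V →L[ℝ] B₁) (γ₂ : V →L[ℝ] B₂)
    (a : V →L[ℝ] V →L[ℝ] ℝ) (hsym : ∀ u v : V, a u v = a v u)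
    (lam₁ : ℝ) (hlam₁ : 0 < lam₁)
    (hcoer : ∀ h : ℝ, 0 < h → ∀ v : V,
      lam₁ * min 1 h * ‖v‖ ^ 2 ≤ a v v + h * ⟪γ₁ v, γ₁ v⟫_ℝ)
    (b : B₁) (q : B₂) (g : H)
    (h₁ h₂ : ℝ) (hh₂ : 0 < h₂) (hh : h₂ ≤ h₁)
    (u₁ u₂ : V) (hu₁₀ : 0 ≤ u₁) (hu₂₀ : 0 ≤ u₂)
    (hu₁ : ∀ v : V, 0 ≤ v →
      ⟪g, ι (v - u₁)⟫_ℝ - ⟪q, γ₂ (v - u₁)⟫_ℝ + h₁ * ⟪b, γ₁ (v - u₁)⟫_ℝ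
        ≤ a u₁ (v - u₁) + h₁ * ⟪γ₁ u₁, γ₁ (v - u₁)⟫_ℝ)
    (hu₂ : ∀ v : V, 0 ≤ v →
      ⟪g, ι (v - u₂)⟫_ℝ - ⟪q, γ₂ (v - u₂)⟫_ℝ + h₂ * ⟪b, γ₁ (v - u₂)⟫_ℝ
        ≤ a u₂ (v - u₂) + h₂ * ⟪γ₁ u₂, γ₁ (v - u₂)⟫_ℝ) :
    ‖u₂ - u₁‖ ≤ ‖γ₁‖ / (lam₁ * min 1 h₂) * ‖b - γ₁ u₁‖ * (h₁ - h₂) := by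

  have H1 := hu₁ u₂ hu₂₀
  have H2 := hu₂ u₁ hu₁₀
  set w := u₂ - u₁ with hw
  have hsym12 := hsym u₁ u₂
  -- key inequality
  have key : a w w + h₂ * ⟪γ₁ w, γ₁ w⟫_ℝ ≤ (h₁ - h₂) * ⟪γ₁ u₁ - b, γ₁ w⟫_ℝ := by
    have e : u₁ - u₂ = -w := by rw [hw]; abel
    rw [e] at H2
    simp only [hw, map_sub, map_neg, ContinuousLinearMap.sub_apply,
      ContinuousLinearMap.neg_apply, inner_sub_left, inner_sub_right,
      inner_neg_left, inner_neg_right] at H1 H2 ⊢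
    nlinarith [H1, H2, hsym12]
  have hgw : ⟪γ₁ u₁ - b, γ₁ w⟫_ℝ ≤ ‖b - γ₁ u₁‖ * (‖γ₁‖ * ‖w‖) := by
    calc ⟪γ₁ u₁ - b, γ₁ w⟫_ℝ ≤ ‖γ₁ u₁ - b‖ * ‖γ₁ w‖ := real_inner_le_norm _ _
    _ ≤ ‖b - γ₁ u₁‖ * (‖γ₁‖ * ‖w‖) := by
        rw [norm_sub_rev]
        exact mul_le_mul_of_nonneg_left (γ₁.le_opNorm w) (norm_nonneg _)
  have hco := hcoer h₂ hh₂ w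
  have hcpos : 0 < lam₁ * min 1 h₂ := by positivity
  have hd : h₁ - h₂ ≥ 0 := by linarith
  have main : lam₁ * min 1 h₂ * ‖w‖ ^ 2 ≤ ‖γ₁‖ * ‖b - γ₁ u₁‖ * (h₁ - h₂) * ‖w‖ := by
    have := mul_le_mul_of_nonneg_left hgw hd
    nlinarith [hco, key]
  rcases eq_or_lt_of_le (norm_nonneg w) with h0 | h0
  · rw [← h0]
    have : 0 ≤ ‖γ₁‖ / (lam₁ * min 1 h₂) * ‖b - γ₁ u₁‖ * (h₁ - h₂) := by positivity
    linarith
  · rw [div_mul_eq_mul_div, div_mul_eq_mul_div, le_div_iff₀ hcpos]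
    nlinarith [main]
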